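/- arXiv:2601.21054 — 3 statements merged into one kernel-verified Lean document; each statement's English description precedes it below -/
import Mathlib

section
/- Sup-norm growth bound for the grid system (Lemma 3.2(a)): Suppose sup_{1 ≤ i ≤ 2d} sup_{x ∈ S_ε} |q_i(x)| ≤ C₁ for some C₁ > 0, that ρ_i(x) ≥ 0 for all 1 ≤ i ≤ 2d and x ∈ S_ε, and that sup_{x ∈ S_ε} |Σ_{i=1}^{2d} r_i(x) − Σ_{i=1}^{2d} ρ_i(x)| ≤ C₂ for some C₂ > 0. If (u, Λ) is a solution of the grid system with initial datum u₀, then for every t ≥ 0, sup_{x ∈ S_ε} u(x,t) ≤ e^{(1+C₂)t} sup_{x ∈ S_ε} u₀(x). -/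
open MeasureTheory Set

noncomputable section

abbrev Euc (d : ℕ) := EuclideanSpace ℝ (Fin d)

/-- Index set for the `2d` lattice directions: `(i, false)` stands for `+eᵢ`
and `(i, true)` for `−eᵢ`. -/
abbrev GI (d : ℕ) := Fin d × Bool

/-- Lattice coordinates for the grid `S_ε = (εℤ)^d`. -/
abbrev GZ (d : ℕ) := Fin d → ℤ

/-- The point of `S_ε ⊆ ℝ^d` with lattice coordinates `ζ`. -/
noncomputable def gridPt {d : ℕ} (ε : ℝ) (ζ : GZ d) : Euc d :=
  (EuclideanSpace.equiv (Fin d) ℝ).symm (fun i => ε * (ζ i : ℝ))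

/-- The direction vector `k_i ∈ ℝ^d`. -/
noncomputable def kvec {d : ℕ} (i : GI d) : Euc d :=
  (if i.2 then (-1 : ℝ) else 1) • (EuclideanSpace.single i.1 1 : Euc d)

/-- The conjugate index `i*` (opposite direction). -/
def gstar {d : ℕ} (i : GI d) : GI d := (i.1, !i.2)

/-- Lattice translation by `k_i`: `x ↦ x + ε k_i` in lattice coordinates. -/
def gstep {d : ℕ} (i : GI d) (ζ : GZ d) : GZ d :=
  Function.update ζ i.1 (ζ i.1 + (if i.2 then -1 else 1))

/-- The jump rate `r_i(x) = ε⁻² + ε⁻¹ q_i(x)`. -/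
noncomputable def grate {d : ℕ} (ε : ℝ) (q : GI d → GZ d → ℝ) (i : GI d) (ζ : GZ d) : ℝ :=
  ε⁻¹ * ε⁻¹ + ε⁻¹ * q i ζ

/-- The reversed rate `ρ_i(x) = r_{i*}(x + ε k_i)`. -/
noncomputable def grho {d : ℕ} (ε : ℝ) (q : GI d → GZ d → ℝ) (i : GI d) (ζ : GZ d) : ℝ :=
  grate ε q (gstar i) (gstep i ζ)

/-- The formal adjoint `L*_ε f(x) = Σᵢ [rᵢ(x−εkᵢ) f(x−εkᵢ) − rᵢ(x) f(x)]`. -/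
noncomputable def gLstar {d : ℕ} (ε : ℝ) (q : GI d → GZ d → ℝ) (f : GZ d → ℝ) (ζ : GZ d) : ℝ :=
  ∑ i : GI d,
    (grate ε q i (gstep (gstar i) ζ) * f (gstep (gstar i) ζ) - grate ε q i ζ * f ζ)

/-- A solution `(u, Λ)` of the grid system with rates built from `q` and initial datum `u₀`. -/
structure IsGridSolution {d : ℕ} (ε : ℝ) (q : GI d → GZ d → ℝ)
    (u₀ : GZ d → ℝ) (u : GZ d → ℝ → ℝ) (Λ : GZ d → ℝ → ℝ) : Prop where
  u_nonneg : ∀ ζ t, 0 ≤ t → 0 ≤ u ζ t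
  u_cont : ∀ ζ, ContinuousOn (u ζ) (Ici 0)
  u_mass : ∀ t : ℝ, 0 ≤ t → HasSum (fun ζ => u ζ t) 1
  lam_meas : ∀ ζ, Measurable (Λ ζ)
  lam_nonneg : ∀ ζ t, 0 ≤ t → 0 ≤ Λ ζ t
  lam_mass : ∀ᵐ t ∂(volume.restrict (Ici (0:ℝ))), HasSum (fun ζ => Λ ζ t) 1
  ode : ∀ ζ, ∀ t : ℝ, 0 ≤ t →
    u ζ t = u₀ ζ + ∫ s in (0:ℝ)..t, (gLstar ε q (fun ξ => u ξ s) ζ + u ζ s - Λ ζ s)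
  argmax : ∑' ζ : GZ d, ∫⁻ t in Ici (0:ℝ),
      ENNReal.ofReal (((⨆ ξ, u ξ t) - u ζ t) * Λ ζ t) = 0

/-- Comparison lemma: if `z t = z 0 + ∫₀ᵗ g`, `g + κ z ≥ 0` pointwise on `[0,T]`,
`κ ≥ 0` and `z 0 ≥ 0`, then `z ≥ 0` on `[0,T]`. -/
lemma comp_nonneg (κ T : ℝ) (hκ : 0 ≤ κ) (z g : ℝ → ℝ)
    (hz : ContinuousOn z (Icc 0 T))
    (hg : IntegrableOn g (Icc 0 T))
    (hint : ∀ t ∈ Icc (0:ℝ) T, z t = z 0 + ∫ s in (0:ℝ)..t, g s)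
    (hpos : ∀ s ∈ Icc (0:ℝ) T, 0 ≤ g s + κ * z s)
    (h0 : 0 ≤ z 0) : ∀ t ∈ Icc (0:ℝ) T, 0 ≤ z t := by
  intro t₀ ht₀
  by_contra hneg
  push_neg at hneg
  set A : Set ℝ := Icc 0 t₀ ∩ z ⁻¹' (Ici 0) with hA
  have hsub : Icc (0:ℝ) t₀ ⊆ Icc 0 T := Icc_subset_Icc le_rfl ht₀.2
  have hAclosed : IsClosed A :=
    ContinuousOn.preimage_isClosed_of_isClosed (hz.mono hsub) isClosed_Icc isClosed_Ici
  have hAne : A.Nonempty := ⟨0, ⟨le_rfl, ht₀.1⟩, h0⟩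
  have hAbdd : BddAbove A := ⟨t₀, fun x hx => hx.1.2⟩
  set t₁ := sSup A with ht₁def
  have ht₁A : t₁ ∈ A := hAclosed.csSup_mem hAne hAbdd
  have ht₁0 : 0 ≤ t₁ := ht₁A.1.1
  have ht₁t₀ : t₁ ≤ t₀ := ht₁A.1.2
  have hz₁ : 0 ≤ z t₁ := ht₁A.2
  have hlt : ∀ s ∈ Ioc t₁ t₀, z s < 0 := by
    intro s hs
    by_contra h
    push_neg at h
    exact absurd (le_csSup hAbdd (⟨⟨ht₁0.trans hs.1.le, hs.2⟩, h⟩ : s ∈ A)) (not_le.2 hs.1)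
  have hII : ∀ a b : ℝ, a ∈ Icc (0:ℝ) T → b ∈ Icc (0:ℝ) T → a ≤ b →
      IntervalIntegrable g volume a b := by
    intro a b ha hb hab
    exact (hg.mono_set (by rw [uIcc_of_le hab]; exact Icc_subset_Icc ha.1 hb.2)).intervalIntegrable
  have ht₁T : t₁ ∈ Icc (0:ℝ) T := ⟨ht₁0, ht₁t₀.trans ht₀.2⟩
  have h0T : (0:ℝ) ∈ Icc (0:ℝ) T := ⟨le_rfl, ht₀.1.trans ht₀.2⟩
  have hsplit : (∫ s in (0:ℝ)..t₁, g s) + ∫ s in t₁..t₀, g s = ∫ s in (0:ℝ)..t₀, g s :=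
    intervalIntegral.integral_add_adjacent_intervals (hII 0 t₁ h0T ht₁T ht₁0)
      (hII t₁ t₀ ht₁T ht₀ ht₁t₀)
  have hkey : z t₀ = z t₁ + ∫ s in t₁..t₀, g s := by
    rw [hint t₀ ht₀, hint t₁ ht₁T]
    linarith [hsplit]
  have hnn : 0 ≤ ∫ s in t₁..t₀, g s := by
    rw [intervalIntegral.integral_of_le ht₁t₀]
    apply setIntegral_nonneg_of_ae_restrict
    filter_upwards [ae_restrict_mem measurableSet_Ioc] with s hs
    have hsT : s ∈ Icc (0:ℝ) T := ⟨ht₁0.trans hs.1.le, hs.2.trans ht₀.2⟩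
    have h1 := hpos s hsT
    have h2 : κ * z s ≤ 0 := mul_nonpos_of_nonneg_of_nonpos hκ (hlt s hs).le
    show (0:ℝ →  ℝ) s ≤ g s
    simp only [Pi.zero_apply]
    linarith
  linarith

lemma gstar_invol {d : ℕ} (i : GI d) : gstar (gstar i) = i := by
  cases i; simp [gstar]

lemma gLstar_decomp {d : ℕ} (ε : ℝ) (q : GI d → GZ d → ℝ) (f : GZ d → ℝ) (ζ : GZ d) :
    gLstar ε q f ζ =
      (∑ i : GI d, grho ε q (gstar i) ζ * f (gstep (gstar i) ζ))
        - (∑ i : GI d, grate ε q i ζ) * f ζ := by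
  unfold gLstar grho
  rw [Finset.sum_sub_distrib, Finset.sum_mul]
  congr 1
  refine Finset.sum_congr rfl fun i _ => ?_
  rw [gstar_invol]

lemma sum_grho_gstar {d : ℕ} (ε : ℝ) (q : GI d → GZ d → ℝ) (ζ : GZ d) :
    ∑ i : GI d, grho ε q (gstar i) ζ = ∑ i : GI d, grho ε q i ζ :=
  Fintype.sum_bijective gstar (Function.Involutive.bijective gstar_invol)
    _ _ (fun _ => rfl)

set_option maxHeartbeats 2000000 in
/-- Lemma 3.2(a): sup-norm growth bound for the grid system. -/
theorem stmt9 (d : ℕ) (hd : 1 ≤ d) (ε : ℝ) (hε : ε ∈ Ioo (0:ℝ) 1)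
    (C₁ : ℝ) (hC₁ : 0 < C₁) (q : GI d → GZ d → ℝ)
    (hq : ∀ i : GI d, ∀ ζ : GZ d, |q i ζ| ≤ C₁)
    (hρ : ∀ i : GI d, ∀ ζ : GZ d, 0 ≤ grho ε q i ζ)
    (C₂ : ℝ) (hC₂pos : 0 < C₂)
    (hC₂ : ∀ ζ : GZ d, |∑ i : GI d, grate ε q i ζ - ∑ i : GI d, grho ε q i ζ| ≤ C₂)
    (u₀ : GZ d → ℝ) (hu₀ : ∀ ζ, 0 ≤ u₀ ζ) (hmass : HasSum u₀ 1)
    (u : GZ d → ℝ → ℝ) (Λ : GZ d → ℝ → ℝ) (hsol : IsGridSolution ε q u₀ u Λ) :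
    ∀ t : ℝ, 0 ≤ t → (⨆ ζ : GZ d, u ζ t) ≤ Real.exp ((1 + C₂) * t) * ⨆ ζ : GZ d, u₀ ζ := by
  intro t₀ ht₀
  obtain ⟨hε0, hε1⟩ := hε
  have hεi : (0:ℝ) < ε⁻¹ := inv_pos.2 hε0
  set B : ℝ := ε⁻¹ * ε⁻¹ + ε⁻¹ * C₁ with hBdef
  have hBpos : 0 < B := by positivity
  set κ : ℝ := (Fintype.card (GI d) : ℝ) * B with hκdef
  have hκ0 : 0 ≤ κ := by positivity
  set lam : ℝ := 1 + C₂ with hlamdef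
  have hlampos : 0 < lam := by simp only [hlamdef]; linarith
  -- rate bounds
  have hrate_abs : ∀ (i : GI d) (ζ' : GZ d), |grate ε q i ζ'| ≤ B := by
    intro i ζ'
    have h1 : |grate ε q i ζ'| ≤ |ε⁻¹ * ε⁻¹| + |ε⁻¹ * q i ζ'| := abs_add_le _ _
    have h2 : |ε⁻¹ * ε⁻¹| = ε⁻¹ * ε⁻¹ := abs_of_pos (by positivity)
    have h3 : |ε⁻¹ * q i ζ'| = ε⁻¹ * |q i ζ'| := by
      rw [abs_mul, abs_of_pos hεi]
    have h4 : ε⁻¹ * |q i ζ'| ≤ ε⁻¹ * C₁ := mul_le_mul_of_nonneg_left (hq i ζ') hεi.le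
    simp only [hBdef]; linarith
  have hsum_rate_le : ∀ ζ' : GZ d, (∑ i : GI d, grate ε q i ζ') ≤ κ := by
    intro ζ'
    calc (∑ i : GI d, grate ε q i ζ') ≤ ∑ _i : GI d, B :=
          Finset.sum_le_sum (fun i _ => (le_abs_self _).trans (hrate_abs i ζ'))
      _ = κ := by
          rw [Finset.sum_const, Finset.card_univ, nsmul_eq_mul]
  have hsum_rho_le : ∀ ζ' : GZ d,
      (∑ i : GI d, grho ε q i ζ') ≤ (∑ i : GI d, grate ε q i ζ') + C₂ := by
    intro ζ'
    have := abs_le.1 (hC₂ ζ')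
    linarith [this.1]
  -- mass bounds
  have hu_le_one : ∀ (ζ' : GZ d) (t : ℝ), 0 ≤ t → u ζ' t ≤ 1 := fun ζ' t ht =>
    le_hasSum (hsol.u_mass t ht) ζ' (fun ξ _ => hsol.u_nonneg ξ t ht)
  have hu0_le_one : ∀ ζ' : GZ d, u₀ ζ' ≤ 1 := fun ζ' =>
    le_hasSum hmass ζ' (fun ξ _ => hu₀ ξ)
  set M₀ : ℝ := ⨆ ζ' : GZ d, u₀ ζ' with hM₀def
  have hM₀bdd : BddAbove (Set.range u₀) := ⟨1, by rintro _ ⟨ζ', rfl⟩; exact hu0_le_one ζ'⟩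
  have hM₀le : ∀ ζ' : GZ d, u₀ ζ' ≤ M₀ := fun ζ' => le_ciSup hM₀bdd ζ'
  have hM₀pos : 0 < M₀ := by
    by_contra h
    push_neg at h
    have hz : ∀ ζ' : GZ d, u₀ ζ' = 0 := fun ζ' =>
      le_antisymm ((hM₀le ζ').trans h) (hu₀ ζ')
    have : u₀ = fun _ => (0:ℝ) := funext hz
    rw [this] at hmass
    exact one_ne_zero (hmass.unique hasSum_zero)
  -- L* bound
  have hgL_le : ∀ (f : GZ d → ℝ) (ζ' : GZ d), (∀ ξ, 0 ≤ f ξ) → (∀ ξ, f ξ ≤ 1) →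
      gLstar ε q f ζ' ≤ 2 * κ := by
    intro f ζ' h0 h1
    have hterm : ∀ i : GI d,
        grate ε q i (gstep (gstar i) ζ') * f (gstep (gstar i) ζ')
          - grate ε q i ζ' * f ζ' ≤ 2 * B := by
      intro i
      have e1 : |grate ε q i (gstep (gstar i) ζ') * f (gstep (gstar i) ζ')| ≤ B := by
        rw [abs_mul]
        calc |grate ε q i (gstep (gstar i) ζ')| * |f (gstep (gstar i) ζ')|
            ≤ B * 1 := mul_le_mul (hrate_abs _ _)
              (abs_le.2 ⟨by linarith [h0 (gstep (gstar i) ζ')], h1 _⟩)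
              (abs_nonneg _) hBpos.le
          _ = B := mul_one B
      have e2 : |grate ε q i ζ' * f ζ'| ≤ B := by
        rw [abs_mul]
        calc |grate ε q i ζ'| * |f ζ'|
            ≤ B * 1 := mul_le_mul (hrate_abs _ _)
              (abs_le.2 ⟨by linarith [h0 ζ'], h1 _⟩) (abs_nonneg _) hBpos.le
          _ = B := mul_one B
      have := le_abs_self (grate ε q i (gstep (gstar i) ζ') * f (gstep (gstar i) ζ'))
      have := neg_abs_le (grate ε q i ζ' * f ζ')
      linarith
    calc gLstar ε q f ζ' ≤ ∑ _i : GI d, 2 * B :=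
          Finset.sum_le_sum (fun i _ => hterm i)
      _ = 2 * κ := by
          rw [Finset.sum_const, Finset.card_univ, nsmul_eq_mul]; ring
  -- the integrand
  set Fu : GZ d → ℝ → ℝ :=
    fun ζ' s => gLstar ε q (fun ξ => u ξ s) ζ' + u ζ' s - Λ ζ' s with hFudef
  have hode : ∀ (ζ' : GZ d) (t : ℝ), 0 ≤ t →
      u ζ' t = u₀ ζ' + ∫ s in (0:ℝ)..t, Fu ζ' s := hsol.ode
  have hcontG : ∀ ζ' : GZ d,
      ContinuousOn (fun s => gLstar ε q (fun ξ => u ξ s) ζ' + u ζ' s) (Ici 0) := by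
    intro ζ'
    apply ContinuousOn.add ?_ (hsol.u_cont ζ')
    have : (fun s => gLstar ε q (fun ξ => u ξ s) ζ')
        = fun s => ∑ i : GI d,
            (grate ε q i (gstep (gstar i) ζ') * u (gstep (gstar i) ζ') s
              - grate ε q i ζ' * u ζ' s) := rfl
    rw [this]
    apply continuousOn_finset_sum
    intro i _
    exact (continuousOn_const.mul (hsol.u_cont _)).sub
      (continuousOn_const.mul (hsol.u_cont ζ'))
  have hΛae : ∀ᵐ s ∂(volume.restrict (Ici (0:ℝ))), ∀ ζ' : GZ d, Λ ζ' s ≤ 1 := by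
    filter_upwards [hsol.lam_mass, ae_restrict_mem measurableSet_Ici] with s hs hmem ζ'
    exact le_hasSum hs ζ' (fun ξ _ => hsol.lam_nonneg ξ s hmem)
  have hΛint : ∀ (ζ' : GZ d) (T : ℝ), 0 ≤ T → IntegrableOn (Λ ζ') (Icc 0 T) := by
    intro ζ' T hT
    apply Integrable.mono' (g := fun _ => (1:ℝ))
      (integrableOn_const measure_Icc_lt_top.ne)
      ((hsol.lam_meas ζ').aestronglyMeasurable.restrict)
    have hae := ae_restrict_of_ae_restrict_of_subset (Icc_subset_Ici_self : Icc (0:ℝ) T ⊆ Ici 0) hΛae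
    filter_upwards [hae, ae_restrict_mem measurableSet_Icc] with s hs hmem
    rw [Real.norm_eq_abs, abs_of_nonneg (hsol.lam_nonneg ζ' s hmem.1)]
    exact hs ζ'
  have hFuint : ∀ (ζ' : GZ d) (T : ℝ), 0 ≤ T → IntegrableOn (Fu ζ') (Icc 0 T) := by
    intro ζ' T hT
    exact (((hcontG ζ').mono Icc_subset_Ici_self).integrableOn_Icc).sub (hΛint ζ' T hT)
  have hFuII : ∀ (ζ' : GZ d) (a b : ℝ), 0 ≤ a → a ≤ b →
      IntervalIntegrable (Fu ζ') volume a b := by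
    intro ζ' a b ha hab
    exact ((hFuint ζ' b (ha.trans hab)).mono_set
      (by rw [uIcc_of_le hab]; exact Icc_subset_Icc ha le_rfl)).intervalIntegrable
  have hu0eq : ∀ ζ' : GZ d, u ζ' 0 = u₀ ζ' := by
    intro ζ'
    have := hode ζ' 0 le_rfl
    simpa using this
  -- Lipschitz-type forward bound
  have hstep : ∀ (ζ' : GZ d) (t t' : ℝ), 0 ≤ t → t ≤ t' →
      u ζ' t' ≤ u ζ' t + (2*κ+1) * (t' - t) := by
    intro ζ' t t' ht htt
    have ht' : 0 ≤ t' := ht.trans htt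
    have h1 := hode ζ' t ht
    have h2 := hode ζ' t' ht'
    have hsplit : (∫ s in (0:ℝ)..t, Fu ζ' s) + ∫ s in t..t', Fu ζ' s
        = ∫ s in (0:ℝ)..t', Fu ζ' s :=
      intervalIntegral.integral_add_adjacent_intervals
        (hFuII ζ' 0 t le_rfl ht) (hFuII ζ' t t' ht htt)
    have hbound : (∫ s in t..t', Fu ζ' s) ≤ ∫ _s in t..t', (2*κ+1 : ℝ) := by
      apply intervalIntegral.integral_mono_on htt (hFuII ζ' t t' ht htt)
        intervalIntegrable_const
      intro s hs
      have hs0 : 0 ≤ s := ht.trans hs.1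
      have hb1 : gLstar ε q (fun ξ => u ξ s) ζ' ≤ 2*κ :=
        hgL_le _ _ (fun ξ => hsol.u_nonneg ξ s hs0) (fun ξ => hu_le_one ξ s hs0)
      have hb2 := hsol.lam_nonneg ζ' s hs0
      have hb3 := hu_le_one ζ' s hs0
      show gLstar ε q (fun ξ => u ξ s) ζ' + u ζ' s - Λ ζ' s ≤ 2*κ+1
      linarith
    rw [intervalIntegral.integral_const, smul_eq_mul] at hbound
    nlinarith [hbound, hsplit, h1, h2]
  -- key Duhamel-type estimate
  have key : ∀ K : ℝ, 1 < K → ∀ t : ℝ, 0 ≤ t →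
      (∀ s, 0 ≤ s → s ≤ t → ∀ ξ, u ξ s ≤ K * M₀ * Real.exp (lam * s)) →
      ∀ ζ' : GZ d,
        u ζ' t ≤ K * M₀ * Real.exp (lam * t) - (K-1) * M₀ * Real.exp (-κ * t) := by
    intro K hK t ht hP ζ'
    set y : ℝ → ℝ :=
      fun s => K * M₀ * Real.exp (lam * s) - (K-1) * M₀ * Real.exp (-κ * s) with hydef
    set Ad : ℝ → ℝ :=
      fun s => (κ + lam) * (K * M₀ * Real.exp (lam * s)) - κ * y s with hAddef
    have hyd : ∀ s : ℝ, HasDerivAt y (Ad s) s := by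
      intro s
      have h1 : HasDerivAt (fun r => Real.exp (lam * r)) (Real.exp (lam * s) * (lam * 1)) s :=
        ((hasDerivAt_id s).const_mul lam).exp
      have h2 : HasDerivAt (fun r => Real.exp (-κ * r)) (Real.exp (-κ * s) * (-κ * 1)) s :=
        ((hasDerivAt_id s).const_mul (-κ)).exp
      have h3 := (h1.const_mul (K * M₀)).sub (h2.const_mul ((K-1) * M₀))
      convert h3 using 1
      · rfl
      · rfl
      · rfl
      simp only [hAddef, hydef]
      ring
    have hycont : Continuous y := by
      simp only [hydef]; fun_prop
    have hAdcont : Continuous Ad := by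
      simp only [hAddef]
      exact (continuous_const.mul (continuous_const.mul
        (Real.continuous_exp.comp (continuous_const.mul continuous_id)))).sub
        (continuous_const.mul hycont)
    have hyint : ∀ b : ℝ, (∫ s in (0:ℝ)..b, Ad s) = y b - y 0 := fun b =>
      intervalIntegral.integral_eq_sub_of_hasDerivAt (fun x _ => hyd x)
        (hAdcont.intervalIntegrable 0 b)
    set z : ℝ → ℝ := fun s => y s - u ζ' s with hzdef
    set g : ℝ → ℝ := fun s => Ad s - Fu ζ' s with hgdef
    have hcompa : ∀ t' ∈ Icc (0:ℝ) t, 0 ≤ z t' := by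
      apply comp_nonneg κ t hκ0 z g
      · exact (hycont.continuousOn).sub ((hsol.u_cont ζ').mono Icc_subset_Ici_self)
      · exact ((hAdcont.continuousOn).integrableOn_Icc).sub (hFuint ζ' t ht)
      · intro s' hs'
        have hig : ∫ r in (0:ℝ)..s', g r
            = (∫ r in (0:ℝ)..s', Ad r) - ∫ r in (0:ℝ)..s', Fu ζ' r :=
          intervalIntegral.integral_sub (hAdcont.intervalIntegrable 0 s')
            (hFuII ζ' 0 s' le_rfl hs'.1)
        have hu' := hode ζ' s' hs'.1
        have hu'' := hu0eq ζ'
        simp only [hzdef]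
        rw [hig, hyint s']
        linarith
      · intro s hs
        have hums : ∀ ξ, u ξ s ≤ K * M₀ * Real.exp (lam * s) :=
          fun ξ => hP s hs.1 hs.2 ξ
        set m : ℝ := K * M₀ * Real.exp (lam * s) with hmdef
        have hm0 : 0 ≤ m := le_trans (hsol.u_nonneg ζ' s hs.1) (hums ζ')
        have hgld := gLstar_decomp ε q (fun ξ => u ξ s) ζ'
        have e1 : (∑ i : GI d, grho ε q (gstar i) ζ' * u (gstep (gstar i) ζ') s)
            ≤ (∑ i : GI d, grho ε q i ζ') * m := by
          rw [← sum_grho_gstar ε q ζ', Finset.sum_mul]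
          exact Finset.sum_le_sum (fun i _ =>
            mul_le_mul_of_nonneg_left (hums _) (hρ _ _))
        have e2 : (∑ i : GI d, grho ε q i ζ') * m
            ≤ ((∑ i : GI d, grate ε q i ζ') + C₂) * m :=
          mul_le_mul_of_nonneg_right (hsum_rho_le ζ') hm0
        have e3 : (κ + 1 - ∑ i : GI d, grate ε q i ζ') * (u ζ' s)
            ≤ (κ + 1 - ∑ i : GI d, grate ε q i ζ') * m :=
          mul_le_mul_of_nonneg_left (hums ζ') (by linarith [hsum_rate_le ζ'])
        have e4 : 0 ≤ Λ ζ' s := hsol.lam_nonneg ζ' s hs.1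
        simp only [hgdef, hzdef, hAddef, hFudef]
        rw [hgld]
        simp only [← hmdef, hlamdef]
        nlinarith [e1, e2, e3, e4]
      · -- z 0 ≥ 0
        simp only [hzdef, hydef, hu0eq ζ', mul_zero, Real.exp_zero, mul_one]
        have := hM₀le ζ'
        linarith
    have := hcompa t ⟨ht, le_rfl⟩
    simp only [hzdef, hydef] at this
    linarith
  -- bootstrap induction
  have main : ∀ K : ℝ, 1 < K → ∀ ζ' : GZ d,
      u ζ' t₀ ≤ K * M₀ * Real.exp (lam * t₀) := by
    intro K hK
    set δ : ℝ := (K-1) * M₀ * Real.exp (-κ * t₀) with hδdef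
    have hδpos : 0 < δ := by
      apply mul_pos (mul_pos (by linarith) hM₀pos) (Real.exp_pos _)
    set η : ℝ := δ / (2*κ + 2) with hηdef
    have hηpos : 0 < η := div_pos hδpos (by linarith)
    have hLη : (2*κ+1) * η ≤ δ := by
      rw [hηdef]
      rw [mul_div_assoc']
      rw [div_le_iff₀ (by linarith : (0:ℝ) < 2*κ+2)]
      nlinarith
    set P : ℝ → Prop :=
      fun t => ∀ s, 0 ≤ s → s ≤ t → ∀ ξ, u ξ s ≤ K * M₀ * Real.exp (lam * s) with hPdef
    have hbase : P 0 := by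
      intro s hs0 hs1 ξ
      have hseq : s = 0 := le_antisymm hs1 hs0
      subst hseq
      rw [hu0eq ξ, mul_zero, Real.exp_zero, mul_one]
      nlinarith [hM₀le ξ, hM₀pos]
    have hstep' : ∀ t : ℝ, 0 ≤ t → t ≤ t₀ → P t → P (t + η) := by
      intro t ht htt hPt s hs0 hs1 ξ
      by_cases hcase : s ≤ t
      · exact hPt s hs0 hcase ξ
      · push_neg at hcase
        have hkey := key K hK t ht hPt ξ
        have hst : u ξ s ≤ u ξ t + (2*κ+1) * (s - t) := hstep ξ t s ht hcase.le
        have hgap : δ ≤ (K-1) * M₀ * Real.exp (-κ * t) := by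
          apply mul_le_mul_of_nonneg_left (Real.exp_le_exp.2 (by nlinarith))
          nlinarith
        have hmono : Real.exp (lam * t) ≤ Real.exp (lam * s) :=
          Real.exp_le_exp.2 (by nlinarith)
        have hLs : (2*κ+1) * (s - t) ≤ δ :=
          le_trans (mul_le_mul_of_nonneg_left (by linarith) (by linarith)) hLη
        have hKM : (0:ℝ) ≤ K * M₀ := by nlinarith
        have h5 : K * M₀ * Real.exp (lam * t) ≤ K * M₀ * Real.exp (lam * s) :=
          mul_le_mul_of_nonneg_left hmono hKM
        linarith
    have hind : ∀ n : ℕ, P (min ((n:ℝ) * η) t₀) := by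
      intro n
      induction n with
      | zero =>
          simpa [min_eq_left ht₀] using hbase
      | succ n ih =>
          by_cases hc : t₀ ≤ (n:ℝ) * η
          · have h1 : min ((n:ℝ) * η) t₀ = t₀ := min_eq_right hc
            have h2 : min (((n:ℝ)+1) * η) t₀ = t₀ := by
              apply min_eq_right
              nlinarith [hηpos]
            rw [h1] at ih
            push_cast
            rw [h2]
            exact ih
          · push_neg at hc
            have h1 : min ((n:ℝ) * η) t₀ = (n:ℝ) * η := min_eq_left hc.le
            rw [h1] at ih
            have hn0 : 0 ≤ (n:ℝ) * η := by positivity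
            have hPs := hstep' _ hn0 hc.le ih
            intro s hs0 hs1 ξ
            apply hPs s hs0 ?_ ξ
            refine le_trans hs1 (le_trans (min_le_left _ _) ?_)
            push_cast
            linarith
    obtain ⟨n, hn⟩ := exists_nat_ge (t₀ / η)
    have hnt : t₀ ≤ (n:ℝ) * η := by
      rw [div_le_iff₀ hηpos] at hn
      linarith
    have hfin := hind n
    rw [min_eq_right hnt] at hfin
    exact fun ζ' => hfin t₀ ht₀ le_rfl ζ'
  -- conclude
  apply ciSup_le
  intro ζ'
  have hcpos : 0 < Real.exp (lam * t₀) * M₀ := by positivity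
  apply le_of_forall_gt_imp_ge_of_dense
  intro c' hc'
  have hKgt : 1 < c' / (Real.exp (lam * t₀) * M₀) := (one_lt_div hcpos).2 hc'
  have hm := main _ hKgt ζ'
  have heq : c' / (Real.exp (lam * t₀) * M₀) * M₀ * Real.exp (lam * t₀) = c' := by
    field_simp
  rw [heq] at hm
  exact hm
end
end

section
/- Example 1.1, normalization and flat top: ∫_ℝ u(x) dx = 1; u(x) = h for all |x| ≤ w; and u(x) < h for all |x| > w. In particular, the supremum of u equals h and is attained exactly on the interval [−w, w]. -/
open MeasureTheory Set

noncomputable section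

/-- `w = log(1 + √2)`. -/
noncomputable def exW : ℝ := Real.log (1 + Real.sqrt 2)

/-- `h = 1/(2(w + √2))`. -/
noncomputable def exH : ℝ := 1 / (2 * (exW + Real.sqrt 2))

/-- The flat-top stationary profile of Example 1.1. -/
noncomputable def exU (x : ℝ) : ℝ :=
  if |x| ≤ exW then exH else 2 * exH * Real.sinh |x| / (Real.cosh |x|) ^ 2

lemma sqrt2_pos : (0:ℝ) < Real.sqrt 2 := Real.sqrt_pos.2 (by norm_num)

lemma sq_sqrt2 : Real.sqrt 2 ^ 2 = 2 := Real.sq_sqrt (by norm_num)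

lemma exW_pos : 0 < exW :=
  Real.log_pos (by linarith [sqrt2_pos])

lemma sinh_exW : Real.sinh exW = 1 := by
  have h0 : (0:ℝ) < 1 + Real.sqrt 2 := by linarith [sqrt2_pos]
  rw [exW, Real.sinh_log h0, inv_eq_one_div]
  field_simp
  nlinarith [sq_sqrt2]

lemma cosh_exW : Real.cosh exW = Real.sqrt 2 := by
  have h0 : (0:ℝ) < 1 + Real.sqrt 2 := by linarith [sqrt2_pos]
  rw [exW, Real.cosh_log h0, inv_eq_one_div]
  field_simp
  nlinarith [sq_sqrt2]

lemma exH_pos : 0 < exH := by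
  rw [exH]
  apply div_pos one_pos
  nlinarith [exW_pos, sqrt2_pos]

/-- auxiliary one-sided profile -/
noncomputable def exF (t : ℝ) : ℝ :=
  if t ≤ exW then exH else 2 * exH * Real.sinh t / (Real.cosh t) ^ 2

lemma exU_eq_exF_abs (x : ℝ) : exU x = exF |x| := rfl

lemma le_of_gt_exW {t : ℝ} (ht : exW < t) :
    2 * exH * Real.sinh t / (Real.cosh t) ^ 2 < exH := by
  have hs : 1 < Real.sinh t := by
    rw [← sinh_exW]; exact Real.sinh_lt_sinh.2 ht
  have hc : Real.cosh t ^ 2 = 1 + Real.sinh t ^ 2 := by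
    nlinarith [Real.cosh_sq_sub_sinh_sq t]
  rw [div_lt_iff₀ (by nlinarith [Real.cosh_pos t])]
  nlinarith [exH_pos, mul_pos exH_pos (show (0:ℝ) < (Real.sinh t - 1)^2 by nlinarith)]

lemma FhasDeriv (t : ℝ) :
    HasDerivAt (fun s => -(Real.cosh s)⁻¹) (Real.sinh t / Real.cosh t ^ 2) t := by
  have h := ((Real.hasDerivAt_cosh t).inv (ne_of_gt (Real.cosh_pos t))).neg
  exact h.congr_deriv (by ring)

lemma tendsto_cosh_atTop' : Filter.Tendsto Real.cosh Filter.atTop Filter.atTop := by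
  apply Filter.tendsto_atTop_mono (fun x => ?_)
    (Real.tendsto_exp_atTop.atTop_div_const (by norm_num : (0:ℝ) < 2))
  rw [Real.cosh_eq]
  have := Real.exp_pos (-x)
  linarith

lemma tendstoF : Filter.Tendsto (fun s => -(Real.cosh s)⁻¹) Filter.atTop (nhds 0) := by
  have h : Filter.Tendsto (fun s => (Real.cosh s)⁻¹) Filter.atTop (nhds 0) :=
    tendsto_cosh_atTop'.inv_tendsto_atTop
  simpa using h.neg

lemma integral_tail : ∫ t in Ioi exW, Real.sinh t / Real.cosh t ^ 2 = 1 / Real.sqrt 2 := by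
  rw [integral_Ioi_of_hasDerivAt_of_nonneg' (fun x _ => FhasDeriv x)
    (fun x hx => by
      have h1 : 0 < Real.sinh x := by
        have := exW_pos; exact Real.sinh_pos_iff.2 (by linarith [hx.out])
      positivity) tendstoF]
  rw [cosh_exW]
  ring

lemma integrable_tail : IntegrableOn (fun t => Real.sinh t / Real.cosh t ^ 2) (Ioi exW) :=
  integrableOn_Ioi_deriv_of_nonneg' (fun x _ => FhasDeriv x)
    (fun x hx => by
      have h1 : 0 < Real.sinh x := by
        have := exW_pos; exact Real.sinh_pos_iff.2 (by linarith [hx.out])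
      positivity) tendstoF

lemma integral_exU : (∫ x : ℝ, exU x) = 1 := by
  have heq : (∫ x : ℝ, exU x) = ∫ x : ℝ, exF |x| := by
    simp only [exU_eq_exF_abs]
  rw [heq, integral_comp_abs]
  have hsplit : Ioi (0:ℝ) = Ioc 0 exW ∪ Ioi exW := (Ioc_union_Ioi_eq_Ioi exW_pos.le).symm
  have hint1 : IntegrableOn exF (Ioc 0 exW) := by
    refine IntegrableOn.congr_fun (f := fun _ => exH)
      (integrableOn_const measure_Ioc_lt_top.ne)
      (fun t ht => ?_) measurableSet_Ioc
    simp [exF, ht.2]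
  have hint2 : IntegrableOn exF (Ioi exW) := by
    refine IntegrableOn.congr_fun
      (f := fun t => 2 * exH * (Real.sinh t / Real.cosh t ^ 2))
      (integrable_tail.const_mul (2 * exH)) (fun t ht => ?_) measurableSet_Ioi
    simp only [exF, if_neg (not_le.2 ht.out)]
    ring
  rw [hsplit, setIntegral_union (Ioc_disjoint_Ioi le_rfl) measurableSet_Ioi hint1 hint2]
  have h1 : ∫ t in Ioc 0 exW, exF t = exW * exH := by
    rw [setIntegral_congr_fun measurableSet_Ioc (g := fun _ => exH) (fun t ht => by simp [exF, ht.2])]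
    simp [Real.volume_Ioc, ENNReal.toReal_ofReal exW_pos.le, exW_pos.le]
  have h2 : ∫ t in Ioi exW, exF t = 2 * exH * (1 / Real.sqrt 2) := by
    rw [setIntegral_congr_fun measurableSet_Ioi
      (g := fun t => 2 * exH * (Real.sinh t / Real.cosh t ^ 2)) (fun t ht => by
        simp only [exF, if_neg (not_le.2 ht.out)]; ring)]
    rw [MeasureTheory.integral_const_mul, integral_tail]
  rw [h1, h2]
  have hexH : exH * (2 * (exW + Real.sqrt 2)) = 1 := by
    rw [exH]
    exact one_div_mul_cancel (by nlinarith [exW_pos, sqrt2_pos])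
  have hdiv : (1:ℝ) / Real.sqrt 2 = Real.sqrt 2 / 2 := by
    rw [div_eq_div_iff sqrt2_pos.ne' (by norm_num : (2:ℝ) ≠ 0)]
    nlinarith [sq_sqrt2]
  rw [hdiv]
  linear_combination hexH

lemma exU_le (x : ℝ) : exU x ≤ exH := by
  rw [exU]
  split
  · exact le_rfl
  · next h => exact (le_of_gt_exW (not_le.1 h)).le

/-- Example 1.1, normalization and flat top: `∫ u = 1`, `u = h` on `[−w, w]`, `u < h`
outside, and the supremum of `u` equals `h`. -/
theorem stmt13 :
    (∫ x : ℝ, exU x) = 1 ∧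
    (∀ x : ℝ, |x| ≤ exW → exU x = exH) ∧
    (∀ x : ℝ, exW < |x| → exU x < exH) ∧
    (⨆ x : ℝ, exU x) = exH := by
  refine ⟨integral_exU, fun x hx => by simp [exU, hx], fun x hx => ?_, ?_⟩
  · rw [exU, if_neg (not_le.2 hx)]
    exact le_of_gt_exW hx
  · apply le_antisymm
    · exact ciSup_le exU_le
    · have h0 : exU 0 = exH := by simp [exU, exW_pos.le]
      rw [← h0]
      exact le_ciSup ⟨exH, fun y ⟨x, hx⟩ => hx ▸ exU_le x⟩ 0
end
end

section
/- Example 1.2, flat-top stationary profiles: Let a > 2 and w ≥ 0, and let u be as defined below. Then u is continuous on ℝ; ∫_ℝ u(x) dx = 1; u(x) ≤ 1/(2(w+a)) for all x, with strict inequality for |x| > w (so the supremum of u is attained exactly on [−w,w]); and for every x > w, u''(x) + a u'(x) + u(x) = 0. -/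
open MeasureTheory Set

noncomputable section

private lemma expAux (lam w x : ℝ) :
    HasDerivAt (fun y : ℝ => Real.exp (-(lam * (y - w)))) (-lam * Real.exp (-(lam * (x - w)))) x := by
  have h1 : HasDerivAt (fun y : ℝ => -(lam * (y - w))) (-lam) x := by
    simpa using (((hasDerivAt_id x).sub_const w).const_mul lam).fun_neg
  simpa [mul_comm] using h1.exp

private lemma intAux (lam w : ℝ) (h : 0 < lam) :
    IntegrableOn (fun t : ℝ => Real.exp (-(lam * (t - w)))) (Ioi w) := by
  have h0 := (exp_neg_integrableOn_Ioi w h).const_mul (Real.exp (lam * w))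
  refine IntegrableOn.congr_fun h0 (fun t _ => ?_) measurableSet_Ioi
  rw [← Real.exp_add]; congr 1; ring

private lemma intVal (lam w : ℝ) (h : 0 < lam) :
    ∫ t in Ioi w, Real.exp (-(lam * (t - w))) = 1 / lam := by
  have hderiv : ∀ x ∈ Ici w, HasDerivAt (fun t : ℝ => -(1 / lam) * Real.exp (-(lam * (t - w))))
      (Real.exp (-(lam * (x - w)))) x := by
    intro x _
    have := (expAux lam w x).const_mul (-(1 / lam))
    refine this.congr_deriv ?_
    field_simp [h.ne']
  have htend : Filter.Tendsto (fun t : ℝ => -(1 / lam) * Real.exp (-(lam * (t - w))))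
      Filter.atTop (nhds 0) := by
    have h1 : Filter.Tendsto (fun t : ℝ => -(lam * (t - w))) Filter.atTop Filter.atBot := by
      apply Filter.tendsto_neg_atBot_iff.mpr
      exact (Filter.tendsto_atTop_add_const_right _ (-w) Filter.tendsto_id).const_mul_atTop h
    have h2 := Real.tendsto_exp_atBot.comp h1
    simpa using h2.const_mul (-(1 / lam))
  have := integral_Ioi_of_hasDerivAt_of_tendsto' hderiv (intAux lam w h) htend
  rw [this]
  simp [h.ne']

/-- Example 1.2, flat-top stationary profiles for drift `b(x) = −a·sgn(x)`, `a > 2`. -/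
theorem stmt15 (a w : ℝ) (ha : 2 < a) (hw : 0 ≤ w)
    (r lam₁ lam₂ : ℝ) (hr : r = Real.sqrt (a ^ 2 - 4))
    (hlam₁ : lam₁ = (a - r) / 2) (hlam₂ : lam₂ = (a + r) / 2)
    (u : ℝ → ℝ)
    (hu : ∀ x : ℝ, u x =
      if |x| ≤ w then 1 / (2 * (w + a))
      else (1 / (2 * (w + a) * r))
        * (lam₂ * Real.exp (-(lam₁ * (|x| - w))) - lam₁ * Real.exp (-(lam₂ * (|x| - w))))) :
    Continuous u ∧
    (∫ x : ℝ, u x) = 1 ∧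
    (∀ x : ℝ, u x ≤ 1 / (2 * (w + a))) ∧
    (∀ x : ℝ, w < |x| → u x < 1 / (2 * (w + a))) ∧
    (∀ x : ℝ, w < x → deriv (deriv u) x + a * deriv u x + u x = 0) := by
  have ha0 : (0:ℝ) < a := by linarith
  have hwa : (0:ℝ) < w + a := by linarith
  have ha4 : (0:ℝ) < a ^ 2 - 4 := by nlinarith
  have hr2 : r ^ 2 = a ^ 2 - 4 := by rw [hr]; exact Real.sq_sqrt ha4.le
  have hrpos : 0 < r := hr ▸ Real.sqrt_pos.mpr ha4
  have hra : r < a := by nlinarith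
  have h1 : 0 < lam₁ := by rw [hlam₁]; linarith
  have h2 : 0 < lam₂ := by rw [hlam₂]; linarith
  have h12 : lam₁ * lam₂ = 1 := by rw [hlam₁, hlam₂]; nlinarith [hr2]
  have hsum : lam₁ + lam₂ = a := by rw [hlam₁, hlam₂]; ring
  have hdiff : lam₂ - lam₁ = r := by rw [hlam₁, hlam₂]; ring
  -- key strict inequality
  have key : ∀ t : ℝ, 0 < t →
      lam₂ * Real.exp (-(lam₁ * (t - 0))) - lam₁ * Real.exp (-(lam₂ * (t - 0))) < r := by
    have hlt : lam₁ < lam₂ := by linarith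
    set G : ℝ → ℝ := fun s => lam₂ * Real.exp (-(lam₁ * (s - 0))) - lam₁ * Real.exp (-(lam₂ * (s - 0))) with hGdef
    have hG : ∀ s : ℝ, HasDerivAt G
        (lam₂ * (-lam₁ * Real.exp (-(lam₁ * (s - 0)))) - lam₁ * (-lam₂ * Real.exp (-(lam₂ * (s - 0))))) s :=
      fun s => ((expAux lam₁ 0 s).const_mul lam₂).sub ((expAux lam₂ 0 s).const_mul lam₁)
    have hanti : StrictAntiOn G (Ici 0) := by
      apply strictAntiOn_of_deriv_neg (convex_Ici 0)
      · exact (continuous_iff_continuousAt.mpr fun s => (hG s).continuousAt).continuousOn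
      · intro s hs
        rw [interior_Ici] at hs
        rw [(hG s).deriv]
        have hsp : (0:ℝ) < s := hs
        have he : Real.exp (-(lam₂ * (s - 0))) < Real.exp (-(lam₁ * (s - 0))) := by
          apply Real.exp_lt_exp.mpr
          nlinarith
        have heq : lam₂ * (-lam₁ * Real.exp (-(lam₁ * (s - 0))))
              - lam₁ * (-lam₂ * Real.exp (-(lam₂ * (s - 0))))
            = Real.exp (-(lam₂ * (s - 0))) - Real.exp (-(lam₁ * (s - 0))) := by
          linear_combination (Real.exp (-(lam₂ * (s - 0))) - Real.exp (-(lam₁ * (s - 0)))) * h12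
        rw [heq]; linarith
    have hG0 : G 0 = r := by
      simp only [hGdef, sub_zero, mul_zero, neg_zero, Real.exp_zero, mul_one]
      linarith
    intro t ht
    have := hanti self_mem_Ici (mem_Ici.mpr ht.le) ht
    rw [hG0] at this
    exact this
  have hbound : ∀ x : ℝ, w < |x| → u x < 1 / (2 * (w + a)) := by
    intro x hx
    have ht : 0 < |x| - w := by linarith
    have hk := key (|x| - w) ht
    rw [hu x, if_neg (not_le.mpr hx)]
    have hpos : 0 < 1 / (2 * (w + a) * r) := by positivity
    calc (1 / (2 * (w + a) * r)) *
          (lam₂ * Real.exp (-(lam₁ * (|x| - w))) - lam₁ * Real.exp (-(lam₂ * (|x| - w))))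
        < (1 / (2 * (w + a) * r)) * r := by
          apply mul_lt_mul_of_pos_left _ hpos
          simpa using hk
      _ = 1 / (2 * (w + a)) := by field_simp
  refine ⟨?_, ?_, ?_, hbound, ?_⟩
  · -- continuity
    have hrep : u = fun x : ℝ => if |x| ≤ w then 1 / (2 * (w + a))
        else (1 / (2 * (w + a) * r))
          * (lam₂ * Real.exp (-(lam₁ * (|x| - w))) - lam₁ * Real.exp (-(lam₂ * (|x| - w)))) :=
      funext hu
    rw [hrep]
    apply Continuous.if_le
    · exact continuous_const
    · fun_prop
    · exact continuous_abs
    · exact continuous_const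
    · intro x hx
      rw [hx]
      have hb : lam₂ * Real.exp (-(lam₁ * (w - w))) - lam₁ * Real.exp (-(lam₂ * (w - w))) = r := by
        simp only [sub_self, mul_zero, neg_zero, Real.exp_zero, mul_one]
        linarith
      rw [hb]
      field_simp
  · -- integral
    set g : ℝ → ℝ := fun t => if t ≤ w then 1 / (2 * (w + a))
      else (1 / (2 * (w + a) * r))
        * (lam₂ * Real.exp (-(lam₁ * (t - w))) - lam₁ * Real.exp (-(lam₂ * (t - w)))) with hg
    have h2int : (∫ x : ℝ, u x) = ∫ x : ℝ, g |x| := by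
      congr 1; funext x; rw [hu x]
    rw [h2int, integral_comp_abs]
    have hIntF : IntegrableOn g (Ioi w) := by
      have hF : IntegrableOn (fun t : ℝ => (1 / (2 * (w + a) * r))
          * (lam₂ * Real.exp (-(lam₁ * (t - w))) - lam₁ * Real.exp (-(lam₂ * (t - w)))))
          (Ioi w) :=
        (((intAux lam₁ w h1).const_mul lam₂).sub ((intAux lam₂ w h2).const_mul lam₁)).const_mul _
      exact hF.congr_fun (fun t ht => (if_neg (not_le.mpr ht)).symm) measurableSet_Ioi
    have hIntc : IntegrableOn g (Ioc 0 w) := by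
      have hc0 : IntegrableOn (fun _ : ℝ => 1 / (2 * (w + a))) (Ioc 0 w) :=
        integrableOn_const measure_Ioc_lt_top.ne
      exact hc0.congr_fun (fun t ht => (if_pos ht.2).symm) measurableSet_Ioc
    have hsplit : Ioc (0:ℝ) w ∪ Ioi w = Ioi 0 := Ioc_union_Ioi_eq_Ioi hw
    rw [← hsplit, setIntegral_union (Ioc_disjoint_Ioi le_rfl) measurableSet_Ioi hIntc hIntF]
    have hinv1 : 1 / lam₁ = lam₂ := by
      field_simp
      linarith [h12]
    have hinv2 : 1 / lam₂ = lam₁ := by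
      field_simp
      nlinarith [h12]
    have hv1 : ∫ t in Ioc (0:ℝ) w, g t = w * (1 / (2 * (w + a))) := by
      rw [setIntegral_congr_fun measurableSet_Ioc (fun t ht => if_pos ht.2)]
      simp [Real.volume_Ioc, ENNReal.toReal_ofReal hw, hw]
    have hv2 : ∫ t in Ioi w, g t = a * (1 / (2 * (w + a))) := by
      rw [setIntegral_congr_fun measurableSet_Ioi (fun t (ht : t ∈ Ioi w) => if_neg (not_le.mpr ht))]
      rw [integral_const_mul,
        integral_sub ((intAux lam₁ w h1).const_mul lam₂) ((intAux lam₂ w h2).const_mul lam₁),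
        integral_const_mul, integral_const_mul,
        intVal lam₁ w h1, intVal lam₂ w h2, hinv1, hinv2]
      have harea : lam₂ * lam₂ - lam₁ * lam₁ = r * a := by rw [← hdiff, ← hsum]; ring
      rw [harea]
      field_simp
    rw [hv1, hv2]
    field_simp
  · -- bound
    intro x
    rcases le_or_gt (|x|) w with h | h
    · rw [hu x, if_pos h]
    · exact (hbound x h).le
  · -- ODE
    intro x hx
    set c := 1 / (2 * (w + a) * r) with hc
    set E : ℝ → ℝ := fun y =>
      c * (lam₂ * Real.exp (-(lam₁ * (y - w))) - lam₁ * Real.exp (-(lam₂ * (y - w)))) with hE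
    set E' : ℝ → ℝ := fun y =>
      c * (lam₂ * (-lam₁ * Real.exp (-(lam₁ * (y - w))))
        - lam₁ * (-lam₂ * Real.exp (-(lam₂ * (y - w))))) with hE'
    set E'' : ℝ → ℝ := fun y =>
      c * (lam₂ * (-lam₁ * (-lam₁ * Real.exp (-(lam₁ * (y - w)))))
        - lam₁ * (-lam₂ * (-lam₂ * Real.exp (-(lam₂ * (y - w)))))) with hE''
    have hdE : ∀ y, HasDerivAt E (E' y) y := fun y =>
      (((expAux lam₁ w y).const_mul lam₂).sub ((expAux lam₂ w y).const_mul lam₁)).const_mul c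
    have hdE' : ∀ y, HasDerivAt E' (E'' y) y := fun y =>
      ((((expAux lam₁ w y).const_mul (-lam₁)).const_mul lam₂).sub
        (((expAux lam₂ w y).const_mul (-lam₂)).const_mul lam₁)).const_mul c
    have huE : ∀ y ∈ Ioi w, u y = E y := by
      intro y hy
      have hy0 : 0 < y := lt_of_le_of_lt hw hy
      rw [hu y, abs_of_pos hy0, if_neg (not_le.mpr hy)]
    have hmem : Ioi w ∈ nhds x := Ioi_mem_nhds hx
    have hd1 : ∀ y ∈ Ioi w, deriv u y = E' y := by
      intro y hy
      have heq : u =ᶠ[nhds y] E := Filter.eventually_of_mem (Ioi_mem_nhds hy) huE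
      rw [Filter.EventuallyEq.deriv_eq heq, (hdE y).deriv]
    have hderiv1 : deriv u x = E' x := hd1 x hx
    have hEq2 : deriv u =ᶠ[nhds x] E' := Filter.eventually_of_mem hmem hd1
    have hderiv2 : deriv (deriv u) x = deriv E' x := Filter.EventuallyEq.deriv_eq hEq2
    rw [hderiv2, (hdE' x).deriv, hderiv1, huE x hx]
    have hq1 : lam₁ ^ 2 - a * lam₁ + 1 = 0 := by rw [← hsum, ← h12]; ring
    have hq2 : lam₂ ^ 2 - a * lam₂ + 1 = 0 := by rw [← hsum, ← h12]; ring
    simp only [hE, hE', hE'', hc]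
    linear_combination ((1 / (2 * (w + a) * r)) * lam₂ * Real.exp (-(lam₁ * (x - w)))) * hq1
      - ((1 / (2 * (w + a) * r)) * lam₁ * Real.exp (-(lam₂ * (x - w)))) * hq2
end
end
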